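/- If the equation Xⁿ + A_{n-1}X^{n-1} + ... + A₀ = 0 over M₂(ℂ) has only finitely many solutions, then the number of solutions is at most C(2n,2) = n(2n−1). -/

import Mathlib

open Polynomial Matrix

namespace Stmt9Aux

noncomputable section

abbrev Mat := Matrix (Fin 2) (Fin 2) ℂ

/-- 2×2 Cayley–Hamilton by direct computation. -/
lemma ch2 (Z : Mat) : Z ^ 2 = Z.trace • Z - Z.det • (1 : Mat) := by
  ext i j
  rw [pow_two]
  fin_cases i <;> fin_cases j <;>
    simp [Matrix.mul_apply, Fin.sum_univ_two, Matrix.trace_fin_two, Matrix.det_fin_two,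
      Matrix.one_apply] <;> ring

/-- det of a 2×2 pencil. -/
lemma det_add_smul (X D : Mat) (s : ℂ) :
    (X + s • D).det =
      X.det + s * (X.trace * D.trace - (X * D).trace) + s ^ 2 * D.det := by
  simp [Matrix.det_fin_two, Matrix.trace_fin_two, Matrix.mul_apply, Fin.sum_univ_two]
  ring

/-- power-reduction coefficients -/
def pq (t d : ℂ) : ℕ → ℂ × ℂ
  | 0 => (0, 1)
  | k + 1 => (t * (pq t d k).1 + (pq t d k).2, -d * (pq t d k).1)

lemma pow_eq (t d : ℂ) (Z : Mat) (hZ : Z ^ 2 = t • Z - d • (1 : Mat)) :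
    ∀ k : ℕ, Z ^ k = (pq t d k).1 • Z + (pq t d k).2 • (1 : Mat) := by
  intro k
  induction k with
  | zero => simp [pq]
  | succ k ih =>
      rw [pow_succ, ih]
      have h1 : (pq t d (k+1)).1 = t * (pq t d k).1 + (pq t d k).2 := rfl
      have h2 : (pq t d (k+1)).2 = -d * (pq t d k).1 := rfl
      rw [h1, h2, add_mul, smul_mul_assoc, smul_mul_assoc, one_mul, ← pow_two, hZ]
      module

/-- right-root factor lemma in `(Mat)[X]` -/
lemma key (B : Mat) : ∀ k : ℕ, ∃ g : Polynomial Mat,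
    (X : Polynomial Mat) ^ k - C (B ^ k) = g * (X - C B)
  | 0 => ⟨0, by simp⟩
  | k + 1 => by
      obtain ⟨g, hg⟩ := key B k
      refine ⟨X * g + C (B ^ k), ?_⟩
      have hc : (C (B ^ k) : Polynomial Mat) * X = X * C (B ^ k) := (X_mul).symm
      calc (X:Polynomial Mat) ^ (k+1) - C (B ^ (k+1))
          = X * (X ^ k - C (B ^ k)) + (X * C (B ^ k) - C (B ^ k) * C B) := by
            rw [mul_sub, ← C_mul, ← pow_succ, ← pow_succ']
            rw [sub_add_sub_cancel]
        _ = (X * g + C (B ^ k)) * (X - C B) := by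
            rw [hg, add_mul, mul_assoc]
            congr 1
            rw [mul_sub, hc]

/-- the big polynomial in `(Mat)[X]` -/
def bigp (n : ℕ) (A : Fin n → Mat) : Polynomial Mat :=
  (X : Polynomial Mat) ^ n + ∑ i : Fin n, C (A i) * X ^ (i : ℕ)

/-- the scalar polynomial `f = det P(λ)` -/
def fpoly (n : ℕ) (A : Fin n → Mat) : Polynomial ℂ :=
  (matPolyEquiv.symm (bigp n A)).det

lemma charpoly_dvd (n : ℕ) (A : Fin n → Mat) (X₀ : Mat)
    (hsol : X₀ ^ n + ∑ i : Fin n, A i * X₀ ^ (i : ℕ) = 0) :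
    X₀.charpoly ∣ fpoly n A := by
  choose g hg using key X₀
  have hp : bigp n A = (g n + ∑ i : Fin n, C (A i) * g (i : ℕ)) * (X - C X₀) := by
    have expand : (g n + ∑ i : Fin n, C (A i) * g (i : ℕ)) * (X - C X₀)
        = (X ^ n - C (X₀ ^ n))
          + ∑ i : Fin n, (C (A i) * X ^ (i : ℕ) - C (A i * X₀ ^ (i : ℕ))) := by
      rw [add_mul, Finset.sum_mul, ← hg]
      congr 1
      refine Finset.sum_congr rfl fun i _ => ?_
      rw [mul_assoc, ← hg, mul_sub, ← C_mul]
    rw [expand, Finset.sum_sub_distrib]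
    have hC : (∑ i : Fin n, (C (A i * X₀ ^ (i : ℕ)) : Polynomial Mat))
        = C (∑ i : Fin n, A i * X₀ ^ (i : ℕ)) := (map_sum C _ _).symm
    have hz : (C (X₀ ^ n) : Polynomial Mat) + ∑ i : Fin n, (C (A i * X₀ ^ (i:ℕ)) : Polynomial Mat) = 0 := by
      rw [hC, ← map_add, hsol, map_zero]
    rw [bigp, ← sub_eq_zero]
    calc (X:Polynomial Mat) ^ n + ∑ i : Fin n, C (A i) * X ^ (i : ℕ)
          - (X ^ n - C (X₀ ^ n)
            + ((∑ i : Fin n, C (A i) * X ^ (i : ℕ)) - ∑ i : Fin n, C (A i * X₀ ^ (i : ℕ))))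
        = C (X₀ ^ n) + ∑ i : Fin n, C (A i * X₀ ^ (i:ℕ)) := by abel
      _ = 0 := hz
  have hm : matPolyEquiv.symm (bigp n A)
      = matPolyEquiv.symm (g n + ∑ i : Fin n, C (A i) * g (i : ℕ)) * charmatrix X₀ := by
    rw [hp, _root_.map_mul]
    congr 1
    rw [← matPolyEquiv_charmatrix]
    exact AlgEquiv.symm_apply_apply _ _
  refine Dvd.intro_left ((matPolyEquiv.symm (g n + ∑ i : Fin n, C (A i) * g (i : ℕ))).det) ?_
  rw [fpoly, hm, Matrix.det_mul, Matrix.charpoly]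

lemma coeff_entry (n : ℕ) (A : Fin n → Mat) (k : ℕ) (i j : Fin 2) :
    ((matPolyEquiv.symm (bigp n A)) i j).coeff k
      = (if n = k then (1 : Mat) i j else 0)
        + ∑ i' : Fin n, (if (i' : ℕ) = k then A i' i j else 0) := by
  have hme : matPolyEquiv (matPolyEquiv.symm (bigp n A)) = bigp n A :=
    AlgEquiv.apply_symm_apply _ _
  have h1 : ((matPolyEquiv.symm (bigp n A)) i j).coeff k = (bigp n A).coeff k i j := by
    rw [← matPolyEquiv_coeff_apply, hme]
  rw [h1, bigp]
  simp only [coeff_add, coeff_X_pow, finset_sum_coeff, coeff_C_mul, mul_ite, mul_one, mul_zero,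
    Matrix.add_apply, Matrix.sum_apply]
  congr 1
  · rcases eq_or_ne n k with h | h
    · subst h; simp
    · simp [h, Ne.symm h]
  · refine Finset.sum_congr rfl fun i' _ => ?_
    rcases eq_or_ne (i' : ℕ) k with h | h
    · subst h; simp
    · simp [h, Ne.symm h]

lemma coeff_entry_gt (n : ℕ) (A : Fin n → Mat) (k : ℕ) (hk : n < k) (i j : Fin 2) :
    ((matPolyEquiv.symm (bigp n A)) i j).coeff k = 0 := by
  rw [coeff_entry]
  rw [if_neg (by omega)]
  rw [zero_add]
  refine Finset.sum_eq_zero fun i' _ => ?_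
  rw [if_neg (by omega)]

lemma natDegree_entry_le (n : ℕ) (A : Fin n → Mat) (i j : Fin 2) :
    ((matPolyEquiv.symm (bigp n A)) i j).natDegree ≤ n :=
  natDegree_le_iff_coeff_eq_zero.2 fun _ hk => coeff_entry_gt n A _ hk i j

lemma coeff_entry_n (n : ℕ) (A : Fin n → Mat) (i j : Fin 2) :
    ((matPolyEquiv.symm (bigp n A)) i j).coeff n = (1 : Mat) i j := by
  rw [coeff_entry, if_pos rfl]
  have : ∑ i' : Fin n, (if (i' : ℕ) = n then A i' i j else 0) = 0 :=
    Finset.sum_eq_zero fun i' _ => by rw [if_neg (by omega)]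
  rw [this, add_zero]

lemma fpoly_eq (n : ℕ) (A : Fin n → Mat) :
    fpoly n A = (matPolyEquiv.symm (bigp n A)) 0 0 * (matPolyEquiv.symm (bigp n A)) 1 1
      - (matPolyEquiv.symm (bigp n A)) 0 1 * (matPolyEquiv.symm (bigp n A)) 1 0 := by
  rw [fpoly, Matrix.det_fin_two]

lemma natDegree_fpoly_le (n : ℕ) (A : Fin n → Mat) : (fpoly n A).natDegree ≤ 2 * n := by
  rw [fpoly_eq, two_mul]
  refine le_trans (natDegree_sub_le _ _) (max_le ?_ ?_) <;>
    exact le_trans (natDegree_mul_le) (add_le_add (natDegree_entry_le n A _ _)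
      (natDegree_entry_le n A _ _))

lemma coeff_mul_top (a b : Polynomial ℂ) (n : ℕ) (ha : a.natDegree ≤ n) (hb : b.natDegree ≤ n) :
    (a * b).coeff (n + n) = a.coeff n * b.coeff n := by
  rw [coeff_mul]
  rw [Finset.sum_eq_single (n, n)]
  · intro p hp hne
    rw [Finset.HasAntidiagonal.mem_antidiagonal] at hp
    rcases lt_trichotomy p.1 n with h | h | h
    · have : n < p.2 := by omega
      rw [coeff_eq_zero_of_natDegree_lt (lt_of_le_of_lt hb this), mul_zero]
    · exfalso; apply hne; have : p.2 = n := by omega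
      exact Prod.ext h this
    · rw [coeff_eq_zero_of_natDegree_lt (lt_of_le_of_lt ha h), zero_mul]
  · intro h
    exfalso; exact h (Finset.HasAntidiagonal.mem_antidiagonal.2 rfl)

lemma coeff_fpoly_top (n : ℕ) (A : Fin n → Mat) : (fpoly n A).coeff (2 * n) = 1 := by
  rw [fpoly_eq, two_mul, coeff_sub, coeff_mul_top _ _ n (natDegree_entry_le n A _ _)
    (natDegree_entry_le n A _ _), coeff_mul_top _ _ n (natDegree_entry_le n A _ _)
    (natDegree_entry_le n A _ _), coeff_entry_n, coeff_entry_n, coeff_entry_n, coeff_entry_n]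
  norm_num [Matrix.one_apply]

lemma fpoly_ne_zero (n : ℕ) (A : Fin n → Mat) : fpoly n A ≠ 0 := fun h => by
  have := coeff_fpoly_top n A
  rw [h] at this
  simp at this

end

end Stmt9Aux

open Stmt9Aux Polynomial Matrix in
/-- If the equation Xⁿ + Σ AᵢXⁱ = 0 over M₂(ℂ) has only finitely many
solutions, then it has at most C(2n, 2) solutions. -/
theorem stmt9 (n : ℕ) (hn : 1 ≤ n) (A : Fin n → Matrix (Fin 2) (Fin 2) ℂ)
    (hfin : {X : Matrix (Fin 2) (Fin 2) ℂ |
      X ^ n + ∑ i : Fin n, A i * X ^ (i : ℕ) = 0}.Finite) :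
    Nat.card {X : Matrix (Fin 2) (Fin 2) ℂ |
      X ^ n + ∑ i : Fin n, A i * X ^ (i : ℕ) = 0} ≤ Nat.choose (2 * n) 2 := by
  classical
  set S : Set Mat := {X : Matrix (Fin 2) (Fin 2) ℂ |
      X ^ n + ∑ i : Fin n, A i * X ^ (i : ℕ) = 0} with hSdef
  -- uniqueness of solutions with given trace and determinant
  have huniq : ∀ Xm ∈ S, ∀ Ym ∈ S, Xm.trace = Ym.trace → Xm.det = Ym.det → Xm = Ym := by
    intro Xm hX Ym hY htr hdet
    by_contra hne
    set t := Xm.trace with htdef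
    set d := Xm.det with hddef
    set Mm : Mat := (pq t d n).1 • (1 : Mat) + ∑ i : Fin n, (pq t d (i : ℕ)).1 • A i with hMmdef
    set Nm : Mat := (pq t d n).2 • (1 : Mat) + ∑ i : Fin n, (pq t d (i : ℕ)).2 • A i with hNmdef
    have hred : ∀ Z : Mat, Z.trace = t → Z.det = d →
        Z ^ n + ∑ i : Fin n, A i * Z ^ (i : ℕ) = Mm * Z + Nm := by
      intro Z h1 h2
      have hZ2 : Z ^ 2 = t • Z - d • (1 : Mat) := by rw [← h1, ← h2]; exact ch2 Z
      have hp := pow_eq t d Z hZ2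
      rw [hp n]
      have hsum : (∑ i : Fin n, A i * Z ^ (i : ℕ))
          = ∑ i : Fin n, ((pq t d (i : ℕ)).1 • (A i * Z) + (pq t d (i : ℕ)).2 • A i) := by
        refine Finset.sum_congr rfl fun i _ => ?_
        rw [hp, mul_add, mul_smul_comm, mul_smul_comm, mul_one]
      rw [hsum, hMmdef, hNmdef, add_mul, Finset.sum_mul, Finset.sum_add_distrib]
      simp only [smul_mul_assoc, one_mul]
      abel
    have hXe : Mm * Xm + Nm = 0 := by rw [← hred Xm rfl rfl]; exact hX
    have hYe : Mm * Ym + Nm = 0 := by rw [← hred Ym htr.symm hdet.symm]; exact hY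
    by_cases hM : Mm = 0
    · -- M = 0 : the whole quadric is solutions
      have hN : Nm = 0 := by rw [hM, zero_mul, zero_add] at hXe; exact hXe
      have hall : ∀ s : ℂ, (!![s, 1; s * (t - s) - d, t - s] : Mat) ∈ S := by
        intro s
        have h1 : (!![s, 1; s * (t - s) - d, t - s] : Mat).trace = t := by
          simp [Matrix.trace_fin_two]
        have h2 : (!![s, 1; s * (t - s) - d, t - s] : Mat).det = d := by
          simp [Matrix.det_fin_two]
        show _ = 0
        rw [hred _ h1 h2, hM, hN, zero_mul, zero_add]
      have hinj : Function.Injective (fun s : ℂ => (!![s, 1; s * (t - s) - d, t - s] : Mat)) := by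
        intro a b h
        have := congrArg (fun M : Mat => M 0 0) h
        simpa using this
      exact (Set.infinite_of_injective_forall_mem hinj hall) hfin
    · -- M ≠ 0 : line of solutions through Xm and Ym
      have hD : Mm * (Ym - Xm) = 0 := by
        have e1 : Mm * Xm = -Nm := eq_neg_of_add_eq_zero_left hXe
        have e2 : Mm * Ym = -Nm := eq_neg_of_add_eq_zero_left hYe
        rw [mul_sub, e1, e2, sub_self]
      have hDne : Ym - Xm ≠ 0 := sub_ne_zero.2 fun h => hne h.symm
      have hdetD : (Ym - Xm).det = 0 := by
        by_contra h
        rcases isUnit_iff_exists.1 ((Matrix.isUnit_iff_isUnit_det _).2 (Ne.isUnit h)) with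
          ⟨E, hE1, hE2⟩
        refine hM ?_
        calc Mm = Mm * ((Ym - Xm) * E) := by rw [hE1, mul_one]
          _ = Mm * (Ym - Xm) * E := by rw [mul_assoc]
          _ = 0 := by rw [hD, zero_mul]
      have htrD : (Ym - Xm).trace = 0 := by
        rw [Matrix.trace_sub, ← htr, sub_self]
      have hcross : Xm.trace * (Ym - Xm).trace - (Xm * (Ym - Xm)).trace = 0 := by
        have h1 := det_add_smul Xm (Ym - Xm) 1
        rw [one_smul, add_sub_cancel, hdetD, ← hdet] at h1
        linear_combination -h1
      have hfam : ∀ s : ℂ, Xm + s • (Ym - Xm) ∈ S := by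
        intro s
        have h1 : (Xm + s • (Ym - Xm)).trace = t := by
          rw [Matrix.trace_add, Matrix.trace_smul, htrD, smul_zero, add_zero]
        have h2 : (Xm + s • (Ym - Xm)).det = d := by
          rw [det_add_smul, hdetD, hcross]; ring_nf; rfl
        show _ = 0
        rw [hred _ h1 h2, mul_add, Matrix.mul_smul, hD, smul_zero, add_zero, hXe]
      have hinj : Function.Injective (fun s : ℂ => Xm + s • (Ym - Xm)) := by
        intro a b h
        simp only [add_right_inj] at h
        have h2 : (a - b) • (Ym - Xm) = 0 := by rw [sub_smul, h, sub_self]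
        exact sub_eq_zero.1 ((smul_eq_zero.1 h2).resolve_right hDne)
      exact (Set.infinite_of_injective_forall_mem hinj hfam) hfin
  -- counting via characteristic polynomials
  have hsplits : ∀ X : Mat, (Matrix.charpoly X).Splits := fun X =>
    IsAlgClosed.splits _
  have hcardroots : ∀ X : Mat, Multiset.card (Matrix.charpoly X).roots = 2 := by
    intro X
    rw [splits_iff_card_roots.1 (hsplits X), Matrix.charpoly_natDegree_eq_dim]
    simp
  have hrootsle : ∀ X ∈ S, (Matrix.charpoly X).roots ≤ (fpoly n A).roots := fun X hX =>
    Polynomial.roots.le_of_dvd (fpoly_ne_zero n A) (charpoly_dvd n A X hX)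
  set T : Finset (Multiset ℂ) := ((fpoly n A).roots.powersetCard 2).toFinset with hT
  have hmemT : ∀ X ∈ S, (Matrix.charpoly X).roots ∈ T := by
    intro X hX
    rw [hT, Multiset.mem_toFinset, Multiset.mem_powersetCard]
    exact ⟨hrootsle X hX, hcardroots X⟩
  have hcp : ∀ X ∈ S, ∀ Y ∈ S,
      (Matrix.charpoly X).roots = (Matrix.charpoly Y).roots → X = Y := by
    intro X hX Y hY h
    have hc : Matrix.charpoly X = Matrix.charpoly Y := by
      rw [(hsplits X).eq_prod_roots_of_monic (Matrix.charpoly_monic X),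
        (hsplits Y).eq_prod_roots_of_monic (Matrix.charpoly_monic Y), h]
    have h1 : X.trace = Y.trace := by
      rw [Matrix.trace_eq_neg_charpoly_coeff, Matrix.trace_eq_neg_charpoly_coeff, hc]
    have h2 : X.det = Y.det := by
      rw [Matrix.det_eq_sign_charpoly_coeff, Matrix.det_eq_sign_charpoly_coeff, hc]
    exact huniq X hX Y hY h1 h2
  have hinj : Function.Injective (fun x : ↥S =>
      (⟨(Matrix.charpoly (x : Mat)).roots, hmemT x x.2⟩ : {y // y ∈ T})) := by
    intro a b h
    exact Subtype.ext (hcp a a.2 b b.2 (congrArg Subtype.val h))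
  calc Nat.card ↥S ≤ Nat.card {y // y ∈ T} := Nat.card_le_card_of_injective _ hinj
    _ = T.card := by simp
    _ ≤ Multiset.card ((fpoly n A).roots.powersetCard 2) := Multiset.toFinset_card_le _
    _ = (Multiset.card (fpoly n A).roots).choose 2 := Multiset.card_powersetCard _ _
    _ ≤ Nat.choose (2 * n) 2 :=
        Nat.choose_le_choose 2 (le_trans (Polynomial.card_roots' _) (natDegree_fpoly_le n A))
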